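/- A non-null real 2-form F on an oriented 4-dimensional Lorentzian vector space has canonical geometry U (i.e. F = e^φ(cos ψ U + sin ψ *U) for some scalars φ, ψ) if and only if its self-dual part ℱ = (1/√2)(F - i*F) is proportional to the self-dual bivector 𝒰 = (1/√2)(U - i*U), if and only if [F, 𝒰] = 0 (commutator of the associated endomorphisms). -/

import Mathlib

noncomputable section

open Complex Matrix

/-- The Levi-Civita epsilon symbol in dimension 4 (ε₀₁₂₃ = 1). -/
def eps4 (a b c d : Fin 4) : ℤ :=
  ∑ σ : Equiv.Perm (Fin 4),
    if σ 0 = a ∧ σ 1 = b ∧ σ 2 = c ∧ σ 3 = d then ((Equiv.Perm.sign σ : ℤˣ) : ℤ) else 0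

/-- The Minkowski metric diag(-1,1,1,1) on a 4-dimensional Lorentzian vector space. -/
def mink {α : Type*} [Ring α] : Matrix (Fin 4) (Fin 4) α :=
  Matrix.diagonal (fun i => if i = 0 then (-1 : α) else 1)

/-- Hodge dual of a 2-form: (∗F)_{ab} = ½ η_{abmn} F^{mn}. -/
def hodge {α : Type*} [Field α] (F : Matrix (Fin 4) (Fin 4) α) : Matrix (Fin 4) (Fin 4) α :=
  Matrix.of fun a b => (1/2 : α) * ∑ m, ∑ n, ((eps4 a b m n : ℤ) : α) * ((mink * F * mink : Matrix (Fin 4) (Fin 4) α) m n)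

/-- Metric product of 2-tensors: (A·B)_{ab} = A_a{}^m B_{mb}. -/
def tdot {α : Type*} [Ring α] (A B : Matrix (Fin 4) (Fin 4) α) : Matrix (Fin 4) (Fin 4) α :=
  A * mink * B

/-- Inner product of 2-forms: (F,H) = ½ F_{ab} H^{ab}. -/
def fpair {α : Type*} [Field α] (F H : Matrix (Fin 4) (Fin 4) α) : α :=
  (1/2 : α) * Matrix.trace (F * mink * Hᵀ * mink)

/-- The self-dual bivector ℱ = (1/√2)(F − i ∗F) associated with a real 2-form F. -/
def sdpart (F : Matrix (Fin 4) (Fin 4) ℝ) : Matrix (Fin 4) (Fin 4) ℂ :=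
  ((Real.sqrt 2 : ℂ))⁻¹ •
    ((F.map (Complex.ofReal)) - Complex.I • hodge (F.map (Complex.ofReal)))

/- ================= auxiliary machinery ================= -/

def eps' (a b c d : Fin 4) : ℤ :=
  ((b:ℤ)-a).sign * ((c:ℤ)-a).sign * ((d:ℤ)-a).sign * ((c:ℤ)-b).sign * ((d:ℤ)-b).sign * ((d:ℤ)-c).sign

theorem eps4_eval : ∀ a b c d : Fin 4, eps4 a b c d = eps' a b c d := by decide

def matA {α : Type*} [Ring α] (a b c d e f : α) : Matrix (Fin 4) (Fin 4) α :=
  !![0,a,b,c; -a,0,d,e; -b,-d,0,f; -c,-e,-f,0]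

lemma sgn1 : Int.sign 1 = 1 := rfl
lemma sgn2 : Int.sign 2 = 1 := rfl
lemma sgn3 : Int.sign 3 = 1 := rfl
lemma sgnm1 : Int.sign (-1) = -1 := rfl
lemma sgnm2 : Int.sign (-2) = -1 := rfl
lemma sgnm3 : Int.sign (-3) = -1 := rfl
lemma finc0 : ((0:Fin 4):ℤ) = 0 := rfl
lemma finc1 : ((1:Fin 4):ℤ) = 1 := rfl
lemma finc2 : ((2:Fin 4):ℤ) = 2 := rfl
lemma finc3 : ((3:Fin 4):ℤ) = 3 := rfl

theorem mink_matA {α : Type*} [Field α] (a b c d e f : α) :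
    mink * matA a b c d e f * mink = matA (-a) (-b) (-c) d e f := by
  ext i j
  fin_cases i <;> fin_cases j <;>
    simp [matA, mink, Matrix.mul_apply, Fin.sum_univ_four, Matrix.diagonal]

theorem hodge_matA {α : Type*} [Field α] [CharZero α] (a b c d e f : α) :
    hodge (matA a b c d e f) = matA f (-e) d (-c) b (-a) := by
  ext i j
  fin_cases i <;> fin_cases j <;>
  · simp only [hodge, Matrix.of_apply, mink_matA, Fin.sum_univ_four]
    norm_num [eps4_eval, eps', matA, finc0, finc1, finc2, finc3,
      sgn1, sgn2, sgn3, sgnm1, sgnm2, sgnm3, Matrix.cons_val_three, Matrix.cons_val_two, Matrix.cons_val_one, Matrix.head_cons, Matrix.cons_val_zero] <;> ring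

theorem matA_rep {α : Type*} [Field α] [CharZero α] (M : Matrix (Fin 4) (Fin 4) α)
    (h : Mᵀ = -M) : M = matA (M 0 1) (M 0 2) (M 0 3) (M 1 2) (M 1 3) (M 2 3) := by
  have h' : ∀ i j : Fin 4, M i j = -M j i := fun i j => by
    have := congrFun (congrFun h j) i
    simpa [Matrix.transpose_apply, Matrix.neg_apply] using this
  have hd : ∀ i : Fin 4, M i i = 0 := fun i => by
    have h2 := h' i i
    have : (2:α) * M i i = 0 := by linear_combination h2
    rcases mul_eq_zero.mp this with h3 | h3
    · exact absurd h3 two_ne_zero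
    · exact h3
  have e10 : M 1 0 = -M 0 1 := h' 1 0
  have e20 : M 2 0 = -M 0 2 := h' 2 0
  have e30 : M 3 0 = -M 0 3 := h' 3 0
  have e21 : M 2 1 = -M 1 2 := h' 2 1
  have e31 : M 3 1 = -M 1 3 := h' 3 1
  have e32 : M 3 2 = -M 2 3 := h' 3 2
  ext i j
  fin_cases i <;> fin_cases j <;>
    simp [matA, e10, e20, e30, e21, e31, e32, hd]

theorem matA_map (a b c d e f : ℝ) :
    (matA a b c d e f).map Complex.ofReal = matA (a:ℂ) b c d e f := by
  ext i j
  fin_cases i <;> fin_cases j <;> simp [matA]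

theorem matA_transpose {α : Type*} [Ring α] (a b c d e f : α) :
    (matA a b c d e f)ᵀ = matA (-a) (-b) (-c) (-d) (-e) (-f) := by
  ext i j
  fin_cases i <;> fin_cases j <;> simp [matA]

theorem matA_mul_mink {α : Type*} [Field α] (a b c d e f : α) :
    matA a b c d e f * mink = !![0,a,b,c; a,0,d,e; b,-d,0,f; c,-e,-f,0] := by
  ext i j
  fin_cases i <;> fin_cases j <;>
    simp [matA, mink, Matrix.mul_apply, Fin.sum_univ_four, Matrix.diagonal]

theorem fpair_matA {α : Type*} [Field α] [CharZero α] (a b c d e f a' b' c' d' e' f' : α) :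
    fpair (matA a b c d e f) (matA a' b' c' d' e' f') =
      -(a*a') - b*b' - c*c' + d*d' + e*e' + f*f' := by
  have hassoc : matA a b c d e f * mink * (matA a' b' c' d' e' f')ᵀ * mink
      = (matA a b c d e f * mink) * ((matA a' b' c' d' e' f')ᵀ * mink) := by
    rw [Matrix.mul_assoc]
  rw [fpair, hassoc, matA_transpose, matA_mul_mink, matA_mul_mink]
  simp [Matrix.trace, Matrix.diag, Matrix.mul_apply, Fin.sum_univ_four]
  field_simp
  ring

theorem mink_mul_mink {α : Type*} [Field α] : (mink * mink : Matrix (Fin 4) (Fin 4) α) = 1 := by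
  ext i j
  fin_cases i <;> fin_cases j <;>
    simp [mink, Matrix.mul_apply, Fin.sum_univ_four, Matrix.diagonal, Matrix.one_apply]

theorem tdot_matA {α : Type*} [Field α] (p1 p2 p3 p4 p5 p6 q1 q2 q3 q4 q5 q6 : α) :
    tdot (matA p1 p2 p3 p4 p5 p6) (matA q1 q2 q3 q4 q5 q6) =
    !![-p1*q1-p2*q2-p3*q3, -p2*q4-p3*q5, p1*q4-p3*q6, p1*q5+p2*q6;
      -p4*q2-p5*q3, p1*q1-p4*q4-p5*q5, p1*q2-p5*q6, p1*q3+p4*q6;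
      p4*q1-p6*q3, p2*q1-p6*q5, p2*q2-p4*q4-p6*q6, p2*q3-p4*q5;
      p5*q1+p6*q2, p3*q1+p6*q4, p3*q2-p5*q4, p3*q3-p5*q5-p6*q6] := by
  rw [tdot, matA_mul_mink]
  ext i j
  fin_cases i <;> fin_cases j <;>
    (simp [matA, Matrix.mul_apply, Fin.sum_univ_four]; try ring)

theorem sd_form (x1 x2 x3 x4 x5 x6 : ℂ) :
    matA x1 x2 x3 x4 x5 x6 - Complex.I • matA x6 (-x5) x4 (-x3) x2 (-x1) =
      matA (x1 - Complex.I*x6) (x2 + Complex.I*x5) (x3 - Complex.I*x4)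
        (x4 + Complex.I*x3) (x5 - Complex.I*x2) (x6 + Complex.I*x1) := by
  ext i j
  fin_cases i <;> fin_cases j <;> (simp [matA]; try ring)

theorem asd_form (x1 x2 x3 x4 x5 x6 : ℂ) :
    matA x1 x2 x3 x4 x5 x6 + Complex.I • matA x6 (-x5) x4 (-x3) x2 (-x1) =
      matA (x1 + Complex.I*x6) (x2 - Complex.I*x5) (x3 + Complex.I*x4)
        (x4 - Complex.I*x3) (x5 + Complex.I*x2) (x6 - Complex.I*x1) := by
  ext i j
  fin_cases i <;> fin_cases j <;> (simp [matA]; try ring)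

set_option maxHeartbeats 4000000 in
theorem comm_asd_sd (x1 x2 x3 x4 x5 x6 y1 y2 y3 y4 y5 y6 : ℂ) :
    tdot (matA x1 x2 x3 x4 x5 x6 + Complex.I • matA x6 (-x5) x4 (-x3) x2 (-x1))
         (matA y1 y2 y3 y4 y5 y6 - Complex.I • matA y6 (-y5) y4 (-y3) y2 (-y1)) =
    tdot (matA y1 y2 y3 y4 y5 y6 - Complex.I • matA y6 (-y5) y4 (-y3) y2 (-y1))
         (matA x1 x2 x3 x4 x5 x6 + Complex.I • matA x6 (-x5) x4 (-x3) x2 (-x1)) := by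
  rw [asd_form, sd_form, tdot_matA, tdot_matA]
  ext i j
  fin_cases i <;> fin_cases j <;>
    (simp; try ring_nf; try simp [Complex.I_sq]; try ring)

set_option maxHeartbeats 4000000 in
theorem anticomm_sd (x1 x2 x3 x4 x5 x6 y1 y2 y3 y4 y5 y6 : ℂ) :
    tdot (matA x1 x2 x3 x4 x5 x6 - Complex.I • matA x6 (-x5) x4 (-x3) x2 (-x1))
         (matA y1 y2 y3 y4 y5 y6 - Complex.I • matA y6 (-y5) y4 (-y3) y2 (-y1)) +
    tdot (matA y1 y2 y3 y4 y5 y6 - Complex.I • matA y6 (-y5) y4 (-y3) y2 (-y1))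
         (matA x1 x2 x3 x4 x5 x6 - Complex.I • matA x6 (-x5) x4 (-x3) x2 (-x1)) =
    (-(fpair (matA x1 x2 x3 x4 x5 x6 - Complex.I • matA x6 (-x5) x4 (-x3) x2 (-x1))
         (matA y1 y2 y3 y4 y5 y6 - Complex.I • matA y6 (-y5) y4 (-y3) y2 (-y1)))) • mink := by
  rw [sd_form, sd_form, tdot_matA, tdot_matA, fpair_matA]
  ext i j
  fin_cases i <;> fin_cases j <;>
    (simp [mink, Matrix.diagonal_apply, Matrix.smul_apply, smul_eq_mul];
     try ring_nf; try simp [Complex.I_sq]; try ring)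

/- ====== small algebra lemmas ====== -/

lemma tdot_smul_left {A B : Matrix (Fin 4) (Fin 4) ℂ} (x : ℂ) :
    tdot (x • A) B = x • tdot A B := by
  simp [tdot, Matrix.smul_mul]

lemma tdot_smul_right {A B : Matrix (Fin 4) (Fin 4) ℂ} (x : ℂ) :
    tdot A (x • B) = x • tdot A B := by
  simp [tdot, Matrix.mul_smul]

lemma tdot_add_left {A B C : Matrix (Fin 4) (Fin 4) ℂ} :
    tdot (A + B) C = tdot A C + tdot B C := by
  simp [tdot, Matrix.add_mul]

lemma tdot_add_right {A B C : Matrix (Fin 4) (Fin 4) ℂ} :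
    tdot A (B + C) = tdot A B + tdot A C := by
  simp [tdot, Matrix.mul_add]

lemma tdot_sub_left {A B C : Matrix (Fin 4) (Fin 4) ℂ} :
    tdot (A - B) C = tdot A C - tdot B C := by
  simp [tdot, Matrix.sub_mul]

lemma tdot_sub_right {A B C : Matrix (Fin 4) (Fin 4) ℂ} :
    tdot A (B - C) = tdot A B - tdot A C := by
  simp [tdot, Matrix.mul_sub]

lemma tdot_assoc {A B C : Matrix (Fin 4) (Fin 4) ℂ} :
    tdot (tdot A B) C = tdot A (tdot B C) := by
  simp only [tdot, Matrix.mul_assoc]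

lemma tdot_mink {A : Matrix (Fin 4) (Fin 4) ℂ} : tdot A mink = A := by
  rw [tdot, Matrix.mul_assoc, mink_mul_mink, Matrix.mul_one]

lemma mink_tdot {A : Matrix (Fin 4) (Fin 4) ℂ} : tdot mink A = A := by
  rw [tdot, mink_mul_mink, Matrix.one_mul]

lemma sdpart_matA (a b c d e f : ℝ) :
    sdpart (matA a b c d e f) = ((Real.sqrt 2 : ℂ))⁻¹ •
      (matA (a:ℂ) (b:ℂ) (c:ℂ) (d:ℂ) (e:ℂ) (f:ℂ)
        - Complex.I • matA (f:ℂ) (-(e:ℂ)) (d:ℂ) (-(c:ℂ)) (b:ℂ) (-(a:ℂ))) := by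
  rw [sdpart, matA_map, hodge_matA]

set_option maxHeartbeats 4000000 in
/-- a non-null real 2-form F has canonical geometry U iff its self-dual
part ℱ is proportional to 𝒰, iff [F,𝒰] = 0. -/
theorem stmt17 (U F : Matrix (Fin 4) (Fin 4) ℝ) (hU : Uᵀ = -U) (hF : Fᵀ = -F)
    (hUnit : fpair U U = -1) (hSimple : fpair U (hodge U) = 0)
    (hNonNull : ¬(fpair F F = 0 ∧ fpair F (hodge F) = 0)) :
    ((∃ φ ψ : ℝ, F = Real.exp φ • (Real.cos ψ • U + Real.sin ψ • hodge U)) ↔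
      (∃ c : ℂ, sdpart F = c • sdpart U)) ∧
    ((∃ c : ℂ, sdpart F = c • sdpart U) ↔
      tdot (F.map Complex.ofReal) (sdpart U) - tdot (sdpart U) (F.map Complex.ofReal) = 0) := by
  obtain ⟨u1,u2,u3,u4,u5,u6,rfl⟩ : ∃ a b c d e f, U = matA a b c d e f :=
    ⟨_,_,_,_,_,_, matA_rep U hU⟩
  obtain ⟨f1,f2,f3,f4,f5,f6,rfl⟩ : ∃ a b c d e f, F = matA a b c d e f :=
    ⟨_,_,_,_,_,_, matA_rep F hF⟩
  have hs : ((Real.sqrt 2 : ℂ)) ≠ 0 := by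
    simp only [ne_eq, Complex.ofReal_eq_zero]
    positivity
  have hsi : ((Real.sqrt 2 : ℂ))⁻¹ ≠ 0 := inv_ne_zero hs
  rw [fpair_matA] at hUnit
  rw [hodge_matA, fpair_matA] at hSimple
  rw [fpair_matA, hodge_matA, fpair_matA] at hNonNull
  set s : ℂ := ((Real.sqrt 2 : ℂ)) with hs_def
  set UC : Matrix (Fin 4) (Fin 4) ℂ := matA (u1:ℂ) u2 u3 u4 u5 u6 with hUC
  set HU : Matrix (Fin 4) (Fin 4) ℂ := matA ((u6:ℝ):ℂ) (-((u5:ℝ):ℂ)) ((u4:ℝ):ℂ) (-((u3:ℝ):ℂ)) ((u2:ℝ):ℂ) (-((u1:ℝ):ℂ)) with hHU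
  set FC : Matrix (Fin 4) (Fin 4) ℂ := matA (f1:ℂ) f2 f3 f4 f5 f6 with hFC
  set HF : Matrix (Fin 4) (Fin 4) ℂ := matA ((f6:ℝ):ℂ) (-((f5:ℝ):ℂ)) ((f4:ℝ):ℂ) (-((f3:ℝ):ℂ)) ((f2:ℝ):ℂ) (-((f1:ℝ):ℂ)) with hHF
  have hsdU : sdpart (matA u1 u2 u3 u4 u5 u6) = s⁻¹ • (UC - Complex.I • HU) := sdpart_matA _ _ _ _ _ _
  have hsdF : sdpart (matA f1 f2 f3 f4 f5 f6) = s⁻¹ • (FC - Complex.I • HF) := sdpart_matA _ _ _ _ _ _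
  have hmapF : (matA f1 f2 f3 f4 f5 f6).map Complex.ofReal = FC := matA_map _ _ _ _ _ _
  set SU := UC - Complex.I • HU with hSU
  set SF := FC - Complex.I • HF with hSFd
  set AU := UC + Complex.I • HU with hAU
  set AF := FC + Complex.I • HF with hAF
  -- the universal identities
  have hcommAF : tdot AF SU = tdot SU AF := comm_asd_sd _ _ _ _ _ _ _ _ _ _ _ _
  have hantiUU : tdot SU SU + tdot SU SU = (-(fpair SU SU)) • mink := anticomm_sd _ _ _ _ _ _ _ _ _ _ _ _
  have hantiFU : tdot SF SU + tdot SU SF = (-(fpair SF SU)) • mink := anticomm_sd _ _ _ _ _ _ _ _ _ _ _ _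
  -- fpair SU SU = -2
  have hUnitC : -((u1:ℂ)*u1) - u2*u2 - u3*u3 + u4*u4 + u5*u5 + u6*u6 = -1 := by
    exact_mod_cast congrArg (fun r : ℝ => (r:ℂ)) hUnit
  have hSimpleC : -((u1:ℂ)*u6) - u2*(-u5) - u3*u4 + u4*(-u3) + u5*u2 + u6*(-u1) = 0 := by
    exact_mod_cast congrArg (fun r : ℝ => (r:ℂ)) hSimple
  have hfUU : fpair SU SU = -2 := by
    rw [hSU, hUC, hHU, sd_form, fpair_matA]
    linear_combination (1 - Complex.I^2) * hUnitC + (-2*Complex.I) * hSimpleC + Complex.I_sq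
  have htUU : tdot SU SU = mink := by
    have h1 : (2:ℂ) • tdot SU SU = (2:ℂ) • (mink : Matrix (Fin 4) (Fin 4) ℂ) := by
      rw [two_smul, hantiUU, hfUU]; norm_num
    exact smul_right_injective _ (two_ne_zero) h1
  have hSFsum : SF + AF = (2:ℂ) • FC := by
    rw [hSFd, hAF, two_smul]; abel
  constructor
  · constructor
    · rintro ⟨φ, ψ, hFe⟩
      rw [hodge_matA] at hFe
      have hFe' : matA f1 f2 f3 f4 f5 f6 =
          matA (Real.exp φ * (Real.cos ψ * u1 + Real.sin ψ * u6))
               (Real.exp φ * (Real.cos ψ * u2 + Real.sin ψ * (-u5)))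
               (Real.exp φ * (Real.cos ψ * u3 + Real.sin ψ * u4))
               (Real.exp φ * (Real.cos ψ * u4 + Real.sin ψ * (-u3)))
               (Real.exp φ * (Real.cos ψ * u5 + Real.sin ψ * u2))
               (Real.exp φ * (Real.cos ψ * u6 + Real.sin ψ * (-u1))) := by
        rw [hFe]; ext i j; fin_cases i <;> fin_cases j <;> simp [matA] <;> ring
      have e1 : f1 = Real.exp φ * (Real.cos ψ * u1 + Real.sin ψ * u6) := by
        have := congrFun (congrFun hFe' 0) 1; simpa [matA] using this
      have e2 : f2 = Real.exp φ * (Real.cos ψ * u2 + Real.sin ψ * (-u5)) := by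
        have := congrFun (congrFun hFe' 0) 2; simpa [matA] using this
      have e3 : f3 = Real.exp φ * (Real.cos ψ * u3 + Real.sin ψ * u4) := by
        have := congrFun (congrFun hFe' 0) 3; simpa [matA] using this
      have e4 : f4 = Real.exp φ * (Real.cos ψ * u4 + Real.sin ψ * (-u3)) := by
        have := congrFun (congrFun hFe' 1) 2; simpa [matA] using this
      have e5 : f5 = Real.exp φ * (Real.cos ψ * u5 + Real.sin ψ * u2) := by
        have := congrFun (congrFun hFe' 1) 3; simpa [matA] using this
      have e6 : f6 = Real.exp φ * (Real.cos ψ * u6 + Real.sin ψ * (-u1)) := by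
        have := congrFun (congrFun hFe' 2) 3; simpa [matA] using this
      refine ⟨(Real.exp φ * Real.cos ψ : ℝ) + (Real.exp φ * Real.sin ψ : ℝ) * Complex.I, ?_⟩
      rw [hsdF, hsdU]
      ext i j
      fin_cases i <;> fin_cases j <;>
        simp [hSFd, hSU, hFC, hUC, hHF, hHU, matA, e1, e2, e3, e4, e5, e6] <;>
        push_cast <;> ring_nf <;> simp [Complex.I_sq] <;> try ring
    · rintro ⟨c, hc⟩
      rw [hsdF, hsdU] at hc
      have hSFc : SF = c • SU := by
        have h' : s⁻¹ • SF = s⁻¹ • (c • SU) := by rw [hc, smul_comm]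
        exact smul_right_injective _ hsi h'
      -- entrywise real equations
      have E1 : (f1:ℂ) - Complex.I * f6 = c * ((u1:ℂ) - Complex.I * u6) := by
        have := congrFun (congrFun hSFc 0) 1
        simpa [hSFd, hSU, hFC, hUC, hHF, hHU, matA] using this
      have E2 : (f2:ℂ) + Complex.I * f5 = c * ((u2:ℂ) + Complex.I * u5) := by
        have := congrFun (congrFun hSFc 0) 2
        simp [hSFd, hSU, hFC, hUC, hHF, hHU, matA] at this
        linear_combination this
      have E3 : (f3:ℂ) - Complex.I * f4 = c * ((u3:ℂ) - Complex.I * u4) := by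
        have := congrFun (congrFun hSFc 0) 3
        simp [hSFd, hSU, hFC, hUC, hHF, hHU, matA] at this
        linear_combination this
      have E4 : (f4:ℂ) + Complex.I * f3 = c * ((u4:ℂ) + Complex.I * u3) := by
        have := congrFun (congrFun hSFc 1) 2
        simp [hSFd, hSU, hFC, hUC, hHF, hHU, matA] at this
        linear_combination this
      have E5 : (f5:ℂ) - Complex.I * f2 = c * ((u5:ℂ) - Complex.I * u2) := by
        have := congrFun (congrFun hSFc 1) 3
        simp [hSFd, hSU, hFC, hUC, hHF, hHU, matA] at this
        linear_combination this
      have E6 : (f6:ℂ) + Complex.I * f1 = c * ((u6:ℂ) + Complex.I * u1) := by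
        have := congrFun (congrFun hSFc 2) 3
        simp [hSFd, hSU, hFC, hUC, hHF, hHU, matA] at this
        linear_combination this
      have r1 : f1 = c.re * u1 + c.im * u6 := by
        have h := congrArg Complex.re E1
        simp [Complex.mul_re, Complex.mul_im] at h
        linear_combination h
      have r2 : f2 = c.re * u2 - c.im * u5 := by
        have h := congrArg Complex.re E2
        simp [Complex.mul_re, Complex.mul_im] at h
        linear_combination h
      have r3 : f3 = c.re * u3 + c.im * u4 := by
        have h := congrArg Complex.re E3
        simp [Complex.mul_re, Complex.mul_im] at h
        linear_combination h
      have r4 : f4 = c.re * u4 - c.im * u3 := by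
        have h := congrArg Complex.re E4
        simp [Complex.mul_re, Complex.mul_im] at h
        linear_combination h
      have r5 : f5 = c.re * u5 + c.im * u2 := by
        have h := congrArg Complex.re E5
        simp [Complex.mul_re, Complex.mul_im] at h
        linear_combination h
      have r6 : f6 = c.re * u6 - c.im * u1 := by
        have h := congrArg Complex.re E6
        simp [Complex.mul_re, Complex.mul_im] at h
        linear_combination h
      have hcne : c ≠ 0 := by
        rintro rfl
        have z1 : f1 = 0 := by simpa using r1
        have z2 : f2 = 0 := by simpa using r2
        have z3 : f3 = 0 := by simpa using r3
        have z4 : f4 = 0 := by simpa using r4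
        have z5 : f5 = 0 := by simpa using r5
        have z6 : f6 = 0 := by simpa using r6
        exact hNonNull ⟨by rw [z1, z2, z3, z4, z5, z6]; ring,
          by rw [z1, z2, z3, z4, z5, z6]; ring⟩
      have habs : ‖c‖ ≠ 0 := norm_ne_zero_iff.mpr hcne
      refine ⟨Real.log (‖c‖), Complex.arg c, ?_⟩
      have hre : Real.exp (Real.log (‖c‖)) * Real.cos (Complex.arg c) = c.re := by
        rw [Real.exp_log (norm_pos_iff.mpr hcne : (0:ℝ) < ‖c‖), Complex.cos_arg hcne]
        field_simp
      have him : Real.exp (Real.log (‖c‖)) * Real.sin (Complex.arg c) = c.im := by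
        rw [Real.exp_log (norm_pos_iff.mpr hcne : (0:ℝ) < ‖c‖), Complex.sin_arg]
        field_simp
      rw [hodge_matA]
      ext i j
      fin_cases i <;> fin_cases j <;> simp [matA] <;>
        first
          | linear_combination r1 - u1*hre - u6*him
          | linear_combination -r1 + u1*hre + u6*him
          | linear_combination r2 - u2*hre + u5*him
          | linear_combination -r2 + u2*hre - u5*him
          | linear_combination r3 - u3*hre - u4*him
          | linear_combination -r3 + u3*hre + u4*him
          | linear_combination r4 - u4*hre + u3*him
          | linear_combination -r4 + u4*hre - u3*him
          | linear_combination r5 - u5*hre - u2*him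
          | linear_combination -r5 + u5*hre + u2*him
          | linear_combination r6 - u6*hre + u1*him
          | linear_combination -r6 + u6*hre - u1*him
  · constructor
    · rintro ⟨c, hc⟩
      rw [hsdF, hsdU] at hc
      have hSFc : SF = c • SU := by
        have h' : s⁻¹ • SF = s⁻¹ • (c • SU) := by rw [hc, smul_comm]
        exact smul_right_injective _ hsi h'
      rw [hmapF, hsdU]
      have key : tdot FC SU = tdot SU FC := by
        have h2 : (2:ℂ) • tdot FC SU = (2:ℂ) • tdot SU FC := by
          calc (2:ℂ) • tdot FC SU = tdot ((2:ℂ) • FC) SU := (tdot_smul_left _).symm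
            _ = tdot (SF + AF) SU := by rw [hSFsum]
            _ = tdot SF SU + tdot AF SU := tdot_add_left
            _ = c • tdot SU SU + tdot SU AF := by rw [hSFc, tdot_smul_left, hcommAF]
            _ = tdot SU (c • SU) + tdot SU AF := by rw [tdot_smul_right]
            _ = tdot SU (SF + AF) := by rw [← hSFc, ← tdot_add_right]
            _ = tdot SU ((2:ℂ) • FC) := by rw [hSFsum]
            _ = (2:ℂ) • tdot SU FC := tdot_smul_right _
        exact smul_right_injective _ two_ne_zero h2
      rw [tdot_smul_right, tdot_smul_left, key, sub_self]
    · intro hcm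
      rw [hmapF, hsdU] at hcm
      have hcm' : tdot FC SU = tdot SU FC := by
        rw [tdot_smul_right, tdot_smul_left, ← smul_sub] at hcm
        have h0 := (smul_eq_zero.mp hcm).resolve_left hsi
        exact sub_eq_zero.mp h0
      have hSF2 : SF = (2:ℂ) • FC - AF := by rw [← hSFsum]; abel
      have hcommSF : tdot SF SU = tdot SU SF := by
        calc tdot SF SU = tdot ((2:ℂ) • FC - AF) SU := by rw [← hSF2]
          _ = (2:ℂ) • tdot FC SU - tdot AF SU := by rw [tdot_sub_left, tdot_smul_left]
          _ = (2:ℂ) • tdot SU FC - tdot SU AF := by rw [hcm', hcommAF]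
          _ = tdot SU ((2:ℂ) • FC - AF) := by rw [tdot_sub_right, tdot_smul_right]
          _ = tdot SU SF := by rw [← hSF2]
      set κ := fpair SF SU with hκ
      have h3 : (2:ℂ) • tdot SU SF = (-κ) • (mink : Matrix (Fin 4) (Fin 4) ℂ) := by
        rw [two_smul]
        nth_rewrite 1 [← hcommSF]
        exact hantiFU
      have h4 : tdot SU SF = ((-κ)/2) • (mink : Matrix (Fin 4) (Fin 4) ℂ) := by
        calc tdot SU SF = (2:ℂ)⁻¹ • ((2:ℂ) • tdot SU SF) := (inv_smul_smul₀ two_ne_zero _).symm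
          _ = (2:ℂ)⁻¹ • ((-κ) • (mink : Matrix (Fin 4) (Fin 4) ℂ)) := by rw [h3]
          _ = ((-κ)/2) • (mink : Matrix (Fin 4) (Fin 4) ℂ) := by
              rw [smul_smul]; congr 1; ring
      have h5 : SF = ((-κ)/2) • SU := by
        calc SF = tdot mink SF := mink_tdot.symm
          _ = tdot (tdot SU SU) SF := by rw [htUU]
          _ = tdot SU (tdot SU SF) := tdot_assoc
          _ = tdot SU (((-κ)/2) • (mink : Matrix (Fin 4) (Fin 4) ℂ)) := by rw [h4]
          _ = ((-κ)/2) • tdot SU mink := tdot_smul_right _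
          _ = ((-κ)/2) • SU := by rw [tdot_mink]
      exact ⟨(-κ)/2, by rw [hsdF, hsdU, h5, smul_comm]⟩
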